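/- Let f be L-smooth and convex with nonempty set of minimizers X★ and minimum f★, and suppose the quadratic functional growth condition f(x) − f★ ≥ (μ/2)‖x − π(x)‖² holds, where π(x) is the projection of x onto X★. Then for the gradient descent step T_γ(x) = x − γ∇f(x) with 0 < γ ≤ 1/L, ‖T_γ(x) − π(x)‖² ≤ ‖x − π(x)‖² − (1 − Lγ)γ²‖∇f(x)‖² − 2γ(f(T_γ(x)) − f★). -/

import Mathlib

open RealInnerProductSpace
variable {d : ℕ}
-- derivative of f along a line
lemma line_deriv (f : EuclideanSpace ℝ (Fin d) → ℝ) (hdiff : Differentiable ℝ f)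
    (x v : EuclideanSpace ℝ (Fin d)) (t : ℝ) :
    HasDerivAt (fun s : ℝ => f (x + s • v)) ⟪gradient f (x + t • v), v⟫ t := by
  have hc : HasDerivAt (fun s : ℝ => x + s • v) v t := by
    simpa using ((hasDerivAt_id t).smul_const v).const_add x
  have hg := (hdiff (x + t • v)).hasGradientAt
  rw [hasGradientAt_iff_hasFDerivAt] at hg
  have := hg.comp_hasDerivAt t hc
  simp at this ⊢; exact this

lemma convex_grad_ineq (f : EuclideanSpace ℝ (Fin d) → ℝ)
    (hconv : ConvexOn ℝ Set.univ f) (hdiff : Differentiable ℝ f)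
    (x y : EuclideanSpace ℝ (Fin d)) :
    ⟪gradient f x, y - x⟫ ≤ f y - f x := by
  set φ : ℝ → ℝ := fun s => f (x + s • (y - x)) with hφ
  have hd : ∀ t, HasDerivAt φ ⟪gradient f (x + t • (y - x)), y - x⟫ t :=
    fun t => line_deriv f hdiff x (y - x) t
  have hφconv : ConvexOn ℝ Set.univ φ := by
    have := hconv.comp_affineMap (AffineMap.lineMap x y : ℝ →ᵃ[ℝ] _)
    have heq : φ = f ∘ (AffineMap.lineMap x y : ℝ →ᵃ[ℝ] _) := by
      ext s
      simp [φ, AffineMap.lineMap_apply, add_comm]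
    rw [heq]; exact this.subset (Set.subset_univ _) convex_univ
  have h0 : HasDerivAt φ ⟪gradient f x, y - x⟫ 0 := by simpa using hd 0
  have := hφconv.le_slope_of_hasDerivAt (Set.mem_univ (0:ℝ)) (Set.mem_univ (1:ℝ))
    (by norm_num) h0
  have hs : slope φ 0 1 = φ 1 - φ 0 := by simp [slope_def_field]
  rw [hs] at this
  simpa [φ] using this

lemma descent_lemma (f : EuclideanSpace ℝ (Fin d) → ℝ) (L : ℝ) (hL : 0 < L)
    (hdiff : Differentiable ℝ f)
    (hlip : ∀ x y, ‖gradient f x - gradient f y‖ ≤ L * ‖x - y‖)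
    (x y : EuclideanSpace ℝ (Fin d)) :
    f y ≤ f x + ⟪gradient f x, y - x⟫ + L / 2 * ‖y - x‖ ^ 2 := by
  set v := y - x with hv
  set ψ : ℝ → ℝ := fun t => f (x + t • v) - t * ⟪gradient f x, v⟫ - L * t ^ 2 / 2 * ‖v‖ ^ 2
    with hψ
  have hdψ : ∀ t, HasDerivAt ψ
      (⟪gradient f (x + t • v), v⟫ - ⟪gradient f x, v⟫ - L * t * ‖v‖ ^ 2) t := by
    intro t
    have h1 := line_deriv f hdiff x v t
    have h2 : HasDerivAt (fun t : ℝ => t * ⟪gradient f x, v⟫) ⟪gradient f x, v⟫ t := by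
      simpa using (hasDerivAt_id t).mul_const ⟪gradient f x, v⟫
    have h3 : HasDerivAt (fun t : ℝ => L * t ^ 2 / 2 * ‖v‖ ^ 2) (L * t * ‖v‖ ^ 2) t := by
      have : HasDerivAt (fun t : ℝ => t ^ 2) (2 * t) t := by
        simpa using hasDerivAt_pow 2 t
      have := ((this.const_mul L).div_const 2).mul_const (‖v‖ ^ 2)
      exact this.congr_deriv (by ring)
    exact (h1.sub h2).sub h3
  have hmono : AntitoneOn ψ (Set.Icc 0 1) := by
    apply antitoneOn_of_deriv_nonpos (convex_Icc 0 1)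
    · exact Continuous.continuousOn
        (Differentiable.continuous fun t => (hdψ t).differentiableAt)
    · intro t ht
      exact ((hdψ t).differentiableAt).differentiableWithinAt
    · intro t ht
      rw [(hdψ t).deriv]
      have ht0 : 0 ≤ t := by
        rw [interior_Icc] at ht; exact le_of_lt ht.1
      have h4 : ⟪gradient f (x + t • v) - gradient f x, v⟫
          ≤ ‖gradient f (x + t • v) - gradient f x‖ * ‖v‖ := real_inner_le_norm _ _
      have h5 : ‖gradient f (x + t • v) - gradient f x‖ ≤ L * (t * ‖v‖) := by
        have := hlip (x + t • v) x
        simpa [norm_smul, abs_of_nonneg ht0] using this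
      have h6 : ⟪gradient f (x + t • v) - gradient f x, v⟫
          ≤ L * t * ‖v‖ ^ 2 := by
        calc _ ≤ ‖gradient f (x + t • v) - gradient f x‖ * ‖v‖ := h4
        _ ≤ L * (t * ‖v‖) * ‖v‖ := by
            apply mul_le_mul_of_nonneg_right h5 (norm_nonneg _)
        _ = L * t * ‖v‖ ^ 2 := by ring
      rw [inner_sub_left] at h6
      linarith
  have := hmono (Set.mem_Icc.2 ⟨le_refl 0, zero_le_one⟩)
    (Set.mem_Icc.2 ⟨zero_le_one, le_refl 1⟩) zero_le_one
  simp only [ψ] at this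
  simp only [one_smul, zero_smul, add_zero] at this
  have hxy : x + v = y := by simp [hv]
  rw [hxy] at this
  nlinarith [this]

theorem stmt16 {d : ℕ} (f : EuclideanSpace ℝ (Fin d) → ℝ) (L μ fstar γ : ℝ)
    (hL : 0 < L) (hμ : 0 < μ)
    (hconv : ConvexOn ℝ Set.univ f)
    (hdiff : Differentiable ℝ f)
    (hlip : ∀ x y, ‖gradient f x - gradient f y‖ ≤ L * ‖x - y‖)
    (hmin : ∀ x, fstar ≤ f x) (hne : ∃ y, f y = fstar)
    (π : EuclideanSpace ℝ (Fin d) → EuclideanSpace ℝ (Fin d))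
    (hπmem : ∀ x, f (π x) = fstar)
    (hπproj : ∀ x y, f y = fstar → ‖x - π x‖ ≤ ‖x - y‖)
    (hQFG : ∀ x, μ / 2 * ‖x - π x‖ ^ 2 ≤ f x - fstar)
    (hγ0 : 0 < γ) (hγL : γ ≤ 1 / L) (x : EuclideanSpace ℝ (Fin d)) :
    ‖(x - γ • gradient f x) - π x‖ ^ 2
      ≤ ‖x - π x‖ ^ 2 - (1 - L * γ) * γ ^ 2 * ‖gradient f x‖ ^ 2
        - 2 * γ * (f (x - γ • gradient f x) - fstar) := by
  set g := gradient f x with hg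
  set p := π x with hp
  set T := x - γ • g with hT
  have hLγ : L * γ ≤ 1 := by
    rw [le_div_iff₀ hL] at hγL; linarith
  -- convexity at minimizer
  have hA : f x - fstar ≤ ⟪g, x - p⟫ := by
    have := convex_grad_ineq f hconv hdiff x p
    rw [hπmem x] at this
    have h2 : ⟪g, p - x⟫ = -⟪g, x - p⟫ := by
      rw [← inner_neg_right]; congr 1; abel
    rw [h2] at this; linarith
  -- descent lemma
  have hB : f T ≤ f x - γ * ‖g‖ ^ 2 + L * γ ^ 2 / 2 * ‖g‖ ^ 2 := by
    have := descent_lemma f L hL hdiff hlip x T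
    have h1 : T - x = -(γ • g) := by rw [hT]; abel
    rw [h1] at this
    have h2 : ⟪g, -(γ • g)⟫ = -(γ * ‖g‖ ^ 2) := by
      rw [inner_neg_right, real_inner_smul_right, real_inner_self_eq_norm_sq]
    have h3 : ‖-(γ • g)‖ ^ 2 = γ ^ 2 * ‖g‖ ^ 2 := by
      rw [norm_neg, norm_smul]; simp [abs_of_pos hγ0]; ring
    rw [h2, h3] at this; linarith
  -- expand the square
  have hexp : ‖T - p‖ ^ 2 = ‖x - p‖ ^ 2 - 2 * γ * ⟪x - p, g⟫ + γ ^ 2 * ‖g‖ ^ 2 := by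
    have h1 : T - p = (x - p) - γ • g := by rw [hT]; abel
    rw [h1, norm_sub_sq_real, real_inner_smul_right, norm_smul]
    simp [abs_of_pos hγ0]; ring
  rw [hexp]
  have hsymm : ⟪x - p, g⟫ = ⟪g, x - p⟫ := real_inner_comm _ _
  rw [hsymm]
  nlinarith [mul_le_mul_of_nonneg_left hA (by linarith : (0:ℝ) ≤ 2 * γ),
    mul_le_mul_of_nonneg_left hB (by linarith : (0:ℝ) ≤ 2 * γ),
    sq_nonneg ‖g‖, mul_pos hγ0 hγ0]
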